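/- Let U ⊆ ℝ be an open set with r³ ≠ 3 for all r ∈ U, let φ(r) = 12^{2/3}·r/(2(r³−3)) and ψ(r) = 2·12^{1/3}·r²/(r³−3), and suppose the derivative φ'(r) ≠ 0 for every r ∈ U. Let H : ℝ → ℝ be six times differentiable on an open set V ⊆ ℝ containing φ(U), and suppose H(φ(r)) = ψ(r) for all r ∈ U. Then H satisfies Noth's equation at every point of φ(U): for all t ∈ φ(U), 10·(H''(t))³·H⁽⁶⁾(t) − 70·(H''(t))²·H⁽³⁾(t)·H⁽⁵⁾(t) − 49·(H''(t))²·(H⁽⁴⁾(t))² + 280·H''(t)·(H⁽³⁾(t))²·H⁽⁴⁾(t) − 175·(H⁽³⁾(t))⁴ = 0. -/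

import Mathlib

set_option maxHeartbeats 2000000

lemma noth_step (U V : Set ℝ) (hU : IsOpen U) (φ H F : ℝ → ℝ) (k : ℕ)
    (hVU : φ '' U ⊆ V)
    (hdiff : ∀ t ∈ V, DifferentiableAt ℝ (iteratedDeriv k H) t)
    (hk : ∀ r ∈ U, iteratedDeriv k H (φ r) = F r)
    (r : ℝ) (hr : r ∈ U) (D W : ℝ)
    (hφD : HasDerivAt φ D r)
    (hF : HasDerivAt F W r) :
    iteratedDeriv (k + 1) H (φ r) * D = W := by
  have hdH : DifferentiableAt ℝ (iteratedDeriv k H) (φ r) := hdiff _ (hVU ⟨r, hr, rfl⟩)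
  have hcomp : HasDerivAt (fun s => iteratedDeriv k H (φ s))
      (deriv (iteratedDeriv k H) (φ r) * D) r := by
    have h0 : HasDerivAt (iteratedDeriv k H ∘ φ) (deriv (iteratedDeriv k H) (φ r) * D) r :=
      HasDerivAt.comp r hdH.hasDerivAt hφD
    simpa [Function.comp_def] using h0
  have heq : (fun s => iteratedDeriv k H (φ s)) =ᶠ[nhds r] F := by
    filter_upwards [hU.mem_nhds hr] with s hs
    exact hk s hs
  have hF' : HasDerivAt (fun s => iteratedDeriv k H (φ s)) W r :=
    hF.congr_of_eventuallyEq heq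
  rw [iteratedDeriv_succ]
  exact hcomp.unique hF'

/-- Noth's equation at a point `t` for a function `H`, expressed via iterated derivatives. -/
def NothEqAt (H : ℝ → ℝ) (t : ℝ) : Prop :=
  10 * (iteratedDeriv 2 H t) ^ 3 * iteratedDeriv 6 H t
    - 70 * (iteratedDeriv 2 H t) ^ 2 * iteratedDeriv 3 H t * iteratedDeriv 5 H t
    - 49 * (iteratedDeriv 2 H t) ^ 2 * (iteratedDeriv 4 H t) ^ 2
    + 280 * iteratedDeriv 2 H t * (iteratedDeriv 3 H t) ^ 2 * iteratedDeriv 4 H t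
    - 175 * (iteratedDeriv 3 H t) ^ 4 = 0

/-- The parametrization `(t,H) = (12^(2/3) r/(2(r³−3)), 2·12^(1/3) r²/(r³−3))` yields a
solution of Noth's equation. -/
theorem noth_parametrization_recovered_untranslated
    (U V : Set ℝ) (hU : IsOpen U) (hUne : ∀ r ∈ U, r ^ 3 ≠ (3 : ℝ)) (hV : IsOpen V)
    (φ ψ H : ℝ → ℝ)
    (hφ : ∀ r : ℝ, φ r = (12 : ℝ) ^ ((2 : ℝ) / 3) * r / (2 * (r ^ 3 - 3)))
    (hψ : ∀ r : ℝ, ψ r = 2 * (12 : ℝ) ^ ((1 : ℝ) / 3) * r ^ 2 / (r ^ 3 - 3))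
    (hφ' : ∀ r ∈ U, deriv φ r ≠ 0)
    (hVU : φ '' U ⊆ V)
    (hdiff : ∀ k < 6, ∀ t ∈ V, DifferentiableAt ℝ (iteratedDeriv k H) t)
    (hpar : ∀ r ∈ U, H (φ r) = ψ r) :
    ∀ t ∈ φ '' U, NothEqAt H t := by
  obtain ⟨c, hc1, hc2, hc3, hc0⟩ : ∃ c : ℝ, (12 : ℝ) ^ ((1 : ℝ) / 3) = c ∧
      (12 : ℝ) ^ ((2 : ℝ) / 3) = c ^ 2 ∧ c ^ 3 = 12 ∧ c ≠ 0 := by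
    refine ⟨(12 : ℝ) ^ ((1 : ℝ) / 3), rfl, ?_, ?_, ?_⟩
    · rw [← Real.rpow_natCast ((12 : ℝ) ^ ((1 : ℝ) / 3)) 2, ← Real.rpow_mul (by norm_num)]
      norm_num
    · rw [← Real.rpow_natCast ((12 : ℝ) ^ ((1 : ℝ) / 3)) 3, ← Real.rpow_mul (by norm_num)]
      norm_num
    · positivity
  have hden : ∀ r ∈ U, (r ^ 3 - 3 : ℝ) ≠ 0 := fun r hr => sub_ne_zero.mpr (hUne r hr)
  have hφfun : φ = fun x : ℝ => c ^ 2 * (x / (2 * (x ^ 3 - 3))) := by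
    funext x
    rw [hφ x, hc2]
    ring
  have hφD : ∀ r ∈ U, HasDerivAt φ (c ^ 2 * (-(2 * r ^ 3 + 3) / (2 * (r ^ 3 - 3) ^ 2))) r := by
    intro r hr
    have hdr := hden r hr
    have hd2 : (2 * (r ^ 3 - 3) : ℝ) ≠ 0 := mul_ne_zero two_ne_zero hdr
    have h := (hasDerivAt_id r).div (((hasDerivAt_pow 3 r).sub_const 3).const_mul (2 : ℝ)) hd2
    rw [hφfun]
    refine HasDerivAt.const_mul _ ?_
    refine h.congr_deriv ?_
    simp only [id]
    field_simp
    ring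
  have hs : ∀ r ∈ U, (2 * r ^ 3 + 3 : ℝ) ≠ 0 := by
    intro r hr h0
    have h1 := hφ' r hr
    rw [(hφD r hr).deriv] at h1
    apply h1
    rw [h0]
    simp
  have hY : ∀ r ∈ U, (c ^ 2 * (-(2 * r ^ 3 + 3) / (2 * (r ^ 3 - 3) ^ 2)) : ℝ) ≠ 0 := by
    intro r hr
    rw [← (hφD r hr).deriv]
    exact hφ' r hr
  have key0 : ∀ r ∈ U, iteratedDeriv 0 H (φ r) = (c * (((2 : ℝ) * r ^ 2) / (r ^ 3 - 3))) := by
    intro r hr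
    rw [iteratedDeriv_zero, hpar r hr, hψ r, hc1]
    ring

  have key1 : ∀ r ∈ U, iteratedDeriv 1 H (φ r) = (c ^ 2 * (((2 : ℝ) * r ^ 1 + ((1 : ℝ) / 3) * r ^ 4) / (2 * r ^ 3 + 3) ^ 1)) := by
    intro r hr
    have hdr := hden r hr
    have hsr := hs r hr
    have hDne : ((r ^ 3 - 3) : ℝ) ≠ 0 := hdr
    have hR : HasDerivAt (fun x : ℝ => ((2 : ℝ) * x ^ 2) / (x ^ 3 - 3))
        ((((4 : ℝ) * r ^ 1) * (r ^ 3 - 3) - ((2 : ℝ) * r ^ 2) * ((3 : ℝ) * r ^ 2)) / ((r ^ 3 - 3)) ^ 2) r := by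
      have h := HasDerivAt.div ((hasDerivAt_pow 2 r).const_mul (2 : ℝ)) ((hasDerivAt_pow 3 r).sub_const 3) hDne
      refine h.congr_deriv ?_
      push_cast
      ring
    have hprod := noth_step U V hU φ H _ 0 hVU (hdiff 0 (by norm_num)) key0 r hr _ _
      (hφD r hr) (hR.const_mul c)
    have hAB : ((((4 : ℝ) * r ^ 1) * (r ^ 3 - 3) - ((2 : ℝ) * r ^ 2) * ((3 : ℝ) * r ^ 2)) / ((r ^ 3 - 3)) ^ 2) = 12 * ((((2 : ℝ) * r ^ 1 + ((1 : ℝ) / 3) * r ^ 4) / (2 * r ^ 3 + 3) ^ 1) * (-(2 * r ^ 3 + 3) / (2 * (r ^ 3 - 3) ^ 2))) := by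
      rw [pow_one (2 * r ^ 3 + 3), div_mul_div_comm, mul_neg, neg_div, mul_comm _ (2 * r ^ 3 + 3), mul_div_mul_left _ _ hsr]
      field_simp
      ring
    have hkey : iteratedDeriv 1 H (φ r) * (c ^ 2 * (-(2 * r ^ 3 + 3) / (2 * (r ^ 3 - 3) ^ 2))) =
        (c ^ 2 * (((2 : ℝ) * r ^ 1 + ((1 : ℝ) / 3) * r ^ 4) / (2 * r ^ 3 + 3) ^ 1)) * (c ^ 2 * (-(2 * r ^ 3 + 3) / (2 * (r ^ 3 - 3) ^ 2))) := by
      rw [hprod, hAB]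
      linear_combination (-(c * ((((2 : ℝ) * r ^ 1 + ((1 : ℝ) / 3) * r ^ 4) / (2 * r ^ 3 + 3) ^ 1) * (-(2 * r ^ 3 + 3) / (2 * (r ^ 3 - 3) ^ 2))))) * hc3
    exact mul_right_cancel₀ (hY r hr) hkey

  have key2 : ∀ r ∈ U, iteratedDeriv 2 H (φ r) = ((((-108) : ℝ) * r ^ 0 + (144 : ℝ) * r ^ 3 + ((-72) : ℝ) * r ^ 6 + (16 : ℝ) * r ^ 9 + (((-4) : ℝ) / 3) * r ^ 12) / (2 * r ^ 3 + 3) ^ 3) := by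
    intro r hr
    have hdr := hden r hr
    have hsr := hs r hr
    have hDne : ((2 * r ^ 3 + 3) ^ 1 : ℝ) ≠ 0 := pow_ne_zero 1 hsr
    have hR : HasDerivAt (fun x : ℝ => ((2 : ℝ) * x ^ 1 + ((1 : ℝ) / 3) * x ^ 4) / (2 * x ^ 3 + 3) ^ 1)
        ((((2 : ℝ) * r ^ 0 + ((4 : ℝ) / 3) * r ^ 3) * (2 * r ^ 3 + 3) ^ 1 - ((2 : ℝ) * r ^ 1 + ((1 : ℝ) / 3) * r ^ 4) * ((1 : ℝ) * (2 * r ^ 3 + 3) ^ 0 * ((6 : ℝ) * r ^ 2))) / ((2 * r ^ 3 + 3) ^ 1) ^ 2) r := by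
      have h := HasDerivAt.div (((hasDerivAt_pow 1 r).const_mul (2 : ℝ)).add ((hasDerivAt_pow 4 r).const_mul ((1 : ℝ) / 3))) ((((hasDerivAt_pow 3 r).const_mul (2 : ℝ)).add_const (3 : ℝ)).pow 1) hDne
      refine h.congr_deriv ?_
      simp only [Pi.add_apply, Pi.pow_apply]
      push_cast
      ring
    have hprod := noth_step U V hU φ H _ 1 hVU (hdiff 1 (by norm_num)) key1 r hr _ _
      (hφD r hr) (hR.const_mul (c ^ 2))
    have hAB : ((((2 : ℝ) * r ^ 0 + ((4 : ℝ) / 3) * r ^ 3) * (2 * r ^ 3 + 3) ^ 1 - ((2 : ℝ) * r ^ 1 + ((1 : ℝ) / 3) * r ^ 4) * ((1 : ℝ) * (2 * r ^ 3 + 3) ^ 0 * ((6 : ℝ) * r ^ 2))) / ((2 * r ^ 3 + 3) ^ 1) ^ 2) = ((((-108) : ℝ) * r ^ 0 + (144 : ℝ) * r ^ 3 + ((-72) : ℝ) * r ^ 6 + (16 : ℝ) * r ^ 9 + (((-4) : ℝ) / 3) * r ^ 12) / (2 * r ^ 3 + 3) ^ 3) * (-(2 * r ^ 3 + 3) / (2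 * (r ^ 3 - 3) ^ 2)) := by
      field_simp
      ring
    have hkey : iteratedDeriv 2 H (φ r) * (c ^ 2 * (-(2 * r ^ 3 + 3) / (2 * (r ^ 3 - 3) ^ 2))) =
        ((((-108) : ℝ) * r ^ 0 + (144 : ℝ) * r ^ 3 + ((-72) : ℝ) * r ^ 6 + (16 : ℝ) * r ^ 9 + (((-4) : ℝ) / 3) * r ^ 12) / (2 * r ^ 3 + 3) ^ 3) * (c ^ 2 * (-(2 * r ^ 3 + 3) / (2 * (r ^ 3 - 3) ^ 2))) := by
      rw [hprod, hAB]
      ring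
    exact mul_right_cancel₀ (hY r hr) hkey

  have key3 : ∀ r ∈ U, iteratedDeriv 3 H (φ r) = (c * ((((-4860) : ℝ) * r ^ 2 + (7776 : ℝ) * r ^ 5 + ((-4860) : ℝ) * r ^ 8 + (1440 : ℝ) * r ^ 11 + ((-180) : ℝ) * r ^ 14 + ((4 : ℝ) / 3) * r ^ 20) / (2 * r ^ 3 + 3) ^ 5)) := by
    intro r hr
    have hdr := hden r hr
    have hsr := hs r hr
    have hDne : ((2 * r ^ 3 + 3) ^ 3 : ℝ) ≠ 0 := pow_ne_zero 3 hsr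
    have hR : HasDerivAt (fun x : ℝ => (((-108) : ℝ) * x ^ 0 + (144 : ℝ) * x ^ 3 + ((-72) : ℝ) * x ^ 6 + (16 : ℝ) * x ^ 9 + (((-4) : ℝ) / 3) * x ^ 12) / (2 * x ^ 3 + 3) ^ 3)
        ((((432 : ℝ) * r ^ 2 + ((-432) : ℝ) * r ^ 5 + (144 : ℝ) * r ^ 8 + ((-16) : ℝ) * r ^ 11) * (2 * r ^ 3 + 3) ^ 3 - (((-108) : ℝ) * r ^ 0 + (144 : ℝ) * r ^ 3 + ((-72) : ℝ) * r ^ 6 + (16 : ℝ) * r ^ 9 + (((-4) : ℝ) / 3) * r ^ 12) * ((3 : ℝ) * (2 * r ^ 3 + 3) ^ 2 * ((6 : ℝ) * r ^ 2))) / ((2 * r ^ 3 + 3) ^ 3) ^ 2) r := by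
      have h := HasDerivAt.div ((((((hasDerivAt_pow 0 r).const_mul ((-108) : ℝ)).add ((hasDerivAt_pow 3 r).const_mul (144 : ℝ))).add ((hasDerivAt_pow 6 r).const_mul ((-72) : ℝ))).add ((hasDerivAt_pow 9 r).const_mul (16 : ℝ))).add ((hasDerivAt_pow 12 r).const_mul (((-4) : ℝ) / 3))) ((((hasDerivAt_pow 3 r).const_mul (2 : ℝ)).add_const (3 : ℝ)).pow 3) hDne
      refine h.congr_deriv ?_
      simp only [Pi.add_apply, Pi.pow_apply]
      push_cast
      ring
    have hprod := noth_step U V hU φ H _ 2 hVU (hdiff 2 (by norm_num)) key2 r hr _ _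
      (hφD r hr) hR
    have hAB : ((((432 : ℝ) * r ^ 2 + ((-432) : ℝ) * r ^ 5 + (144 : ℝ) * r ^ 8 + ((-16) : ℝ) * r ^ 11) * (2 * r ^ 3 + 3) ^ 3 - (((-108) : ℝ) * r ^ 0 + (144 : ℝ) * r ^ 3 + ((-72) : ℝ) * r ^ 6 + (16 : ℝ) * r ^ 9 + (((-4) : ℝ) / 3) * r ^ 12) * ((3 : ℝ) * (2 * r ^ 3 + 3) ^ 2 * ((6 : ℝ) * r ^ 2))) / ((2 * r ^ 3 + 3) ^ 3) ^ 2) = 12 * (((((-4860) : ℝ) * r ^ 2 + (7776 : ℝ) * r ^ 5 + ((-4860) : ℝ) * r ^ 8 + (1440 : ℝ) * r ^ 11 + ((-180) : ℝ) * r ^ 14 + ((4 : ℝ) / 3) * r ^ 20) / (2 * r ^ 3 + 3) ^ 5) * (-(2 * r ^ 3 + 3) / (2 * (r ^ 3 - 3) ^ 2))) := by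
      field_simp
      ring
    have hkey : iteratedDeriv 3 H (φ r) * (c ^ 2 * (-(2 * r ^ 3 + 3) / (2 * (r ^ 3 - 3) ^ 2))) =
        (c * ((((-4860) : ℝ) * r ^ 2 + (7776 : ℝ) * r ^ 5 + ((-4860) : ℝ) * r ^ 8 + (1440 : ℝ) * r ^ 11 + ((-180) : ℝ) * r ^ 14 + ((4 : ℝ) / 3) * r ^ 20) / (2 * r ^ 3 + 3) ^ 5)) * (c ^ 2 * (-(2 * r ^ 3 + 3) / (2 * (r ^ 3 - 3) ^ 2))) := by
      rw [hprod, hAB]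
      linear_combination (-(((((-4860) : ℝ) * r ^ 2 + (7776 : ℝ) * r ^ 5 + ((-4860) : ℝ) * r ^ 8 + (1440 : ℝ) * r ^ 11 + ((-180) : ℝ) * r ^ 14 + ((4 : ℝ) / 3) * r ^ 20) / (2 * r ^ 3 + 3) ^ 5) * (-(2 * r ^ 3 + 3) / (2 * (r ^ 3 - 3) ^ 2)))) * hc3
    exact mul_right_cancel₀ (hY r hr) hkey

  have key4 : ∀ r ∈ U, iteratedDeriv 4 H (φ r) = (c ^ 2 * (((43740 : ℝ) * r ^ 1 + ((-393660) : ℝ) * r ^ 4 + (656100 : ℝ) * r ^ 7 + ((-486000) : ℝ) * r ^ 10 + (189540 : ℝ) * r ^ 13 + ((-38880) : ℝ) * r ^ 16 + (3420 : ℝ) * r ^ 19 + (((-20) : ℝ) / 9) * r ^ 28) / (2 * r ^ 3 + 3) ^ 7)) := by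
    intro r hr
    have hdr := hden r hr
    have hsr := hs r hr
    have hDne : ((2 * r ^ 3 + 3) ^ 5 : ℝ) ≠ 0 := pow_ne_zero 5 hsr
    have hR : HasDerivAt (fun x : ℝ => (((-4860) : ℝ) * x ^ 2 + (7776 : ℝ) * x ^ 5 + ((-4860) : ℝ) * x ^ 8 + (1440 : ℝ) * x ^ 11 + ((-180) : ℝ) * x ^ 14 + ((4 : ℝ) / 3) * x ^ 20) / (2 * x ^ 3 + 3) ^ 5)
        (((((-9720) : ℝ) * r ^ 1 + (38880 : ℝ) * r ^ 4 + ((-38880) : ℝ) * r ^ 7 + (15840 : ℝ) * r ^ 10 + ((-2520) : ℝ) * r ^ 13 + ((80 : ℝ) / 3) * r ^ 19) * (2 * r ^ 3 + 3) ^ 5 - (((-4860) : ℝ) * r ^ 2 + (7776 : ℝ) * r ^ 5 + ((-4860) : ℝ) * r ^ 8 + (1440 : ℝ) * r ^ 11 + ((-180) : ℝ) * r ^ 14 + ((4 : ℝ) / 3) * r ^ 20) * ((5 : ℝ) * (2 * r ^ 3 + 3) ^ 4 * ((6 : ℝ) * r ^ 2))) / ((2 * r ^ 3 + 3) ^ 5)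 ^ 2) r := by
      have h := HasDerivAt.div (((((((hasDerivAt_pow 2 r).const_mul ((-4860) : ℝ)).add ((hasDerivAt_pow 5 r).const_mul (7776 : ℝ))).add ((hasDerivAt_pow 8 r).const_mul ((-4860) : ℝ))).add ((hasDerivAt_pow 11 r).const_mul (1440 : ℝ))).add ((hasDerivAt_pow 14 r).const_mul ((-180) : ℝ))).add ((hasDerivAt_pow 20 r).const_mul ((4 : ℝ) / 3))) ((((hasDerivAt_pow 3 r).const_mul (2 : ℝ)).add_const (3 : ℝ)).pow 5) hDne
      refine h.congr_deriv ?_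
      simp only [Pi.add_apply, Pi.pow_apply]
      push_cast
      ring
    have hprod := noth_step U V hU φ H _ 3 hVU (hdiff 3 (by norm_num)) key3 r hr _ _
      (hφD r hr) (hR.const_mul c)
    have hAB : (((((-9720) : ℝ) * r ^ 1 + (38880 : ℝ) * r ^ 4 + ((-38880) : ℝ) * r ^ 7 + (15840 : ℝ) * r ^ 10 + ((-2520) : ℝ) * r ^ 13 + ((80 : ℝ) / 3) * r ^ 19) * (2 * r ^ 3 + 3) ^ 5 - (((-4860) : ℝ) * r ^ 2 + (7776 : ℝ) * r ^ 5 + ((-4860) : ℝ) * r ^ 8 + (1440 : ℝ) * r ^ 11 + ((-180) : ℝ) * r ^ 14 + ((4 : ℝ) / 3) * r ^ 20) * ((5 : ℝ) * (2 * r ^ 3 + 3) ^ 4 * ((6 : ℝ) * r ^ 2))) / ((2 * r ^ 3 + 3) ^ 5) ^ 2) = 12 * ((((43740 : ℝ) * r ^ 1 + ((-393660) : ℝ) * r ^ 4 + (656100 : ℝ) * r ^ 7 + ((-486000) : ℝ) * r ^ 10 + (189540 : ℝ) * r ^ 13 + ((-38880) : ℝ) * r ^ 16 + (3420 : ℝ)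 * r ^ 19 + (((-20) : ℝ) / 9) * r ^ 28) / (2 * r ^ 3 + 3) ^ 7) * (-(2 * r ^ 3 + 3) / (2 * (r ^ 3 - 3) ^ 2))) := by
      field_simp
      ring
    have hkey : iteratedDeriv 4 H (φ r) * (c ^ 2 * (-(2 * r ^ 3 + 3) / (2 * (r ^ 3 - 3) ^ 2))) =
        (c ^ 2 * (((43740 : ℝ) * r ^ 1 + ((-393660) : ℝ) * r ^ 4 + (656100 : ℝ) * r ^ 7 + ((-486000) : ℝ) * r ^ 10 + (189540 : ℝ) * r ^ 13 + ((-38880) : ℝ) * r ^ 16 + (3420 : ℝ) * r ^ 19 + (((-20) : ℝ) / 9) * r ^ 28) / (2 * r ^ 3 + 3) ^ 7)) * (c ^ 2 * (-(2 * r ^ 3 + 3) / (2 * (r ^ 3 - 3) ^ 2))) := by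
      rw [hprod, hAB]
      linear_combination (-(c * ((((43740 : ℝ) * r ^ 1 + ((-393660) : ℝ) * r ^ 4 + (656100 : ℝ) * r ^ 7 + ((-486000) : ℝ) * r ^ 10 + (189540 : ℝ) * r ^ 13 + ((-38880) : ℝ) * r ^ 16 + (3420 : ℝ) * r ^ 19 + (((-20) : ℝ) / 9) * r ^ 28) / (2 * r ^ 3 + 3) ^ 7) * (-(2 * r ^ 3 + 3) / (2 * (r ^ 3 - 3) ^ 2))))) * hc3
    exact mul_right_cancel₀ (hY r hr) hkey

  have key5 : ∀ r ∈ U, iteratedDeriv 5 H (φ r) = ((((-2361960) : ℝ) * r ^ 0 + (118098000 : ℝ) * r ^ 3 + ((-566870400) : ℝ) * r ^ 6 + (932011920 : ℝ) * r ^ 9 + ((-775247760) : ℝ) * r ^ 12 + (371090160 : ℝ) * r ^ 15 + ((-105462000) : ℝ) * r ^ 18 + (17048880 : ℝ) * r ^ 21 + ((-1331640) : ℝ) * r ^ 24 + (30720 : ℝ) * r ^ 27 + ((-1680) : ℝ) * r ^ 30 + ((560 : ℝ) / 9) * r ^ 36) / (2 * r ^ 3 + 3) ^ 9) := by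
    intro r hr
    have hdr := hden r hr
    have hsr := hs r hr
    have hDne : ((2 * r ^ 3 + 3) ^ 7 : ℝ) ≠ 0 := pow_ne_zero 7 hsr
    have hR : HasDerivAt (fun x : ℝ => ((43740 : ℝ) * x ^ 1 + ((-393660) : ℝ) * x ^ 4 + (656100 : ℝ) * x ^ 7 + ((-486000) : ℝ) * x ^ 10 + (189540 : ℝ) * x ^ 13 + ((-38880) : ℝ) * x ^ 16 + (3420 : ℝ) * x ^ 19 + (((-20) : ℝ) / 9) * x ^ 28) / (2 * x ^ 3 + 3) ^ 7)
        ((((43740 : ℝ) * r ^ 0 + ((-1574640) : ℝ) * r ^ 3 + (4592700 : ℝ) * r ^ 6 + ((-4860000) : ℝ) * r ^ 9 + (2464020 : ℝ) * r ^ 12 + ((-622080) : ℝ) * r ^ 15 + (64980 : ℝ) * r ^ 18 + (((-560) : ℝ) / 9) * r ^ 27) * (2 * r ^ 3 + 3) ^ 7 - ((43740 : ℝ) * r ^ 1 + ((-393660) : ℝ) * r ^ 4 + (656100 : ℝ) * r ^ 7 + ((-486000) : ℝ) * r ^ 10 + (189540 : ℝ) * r ^ 13 + ((-38880) : ℝ)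 * r ^ 16 + (3420 : ℝ) * r ^ 19 + (((-20) : ℝ) / 9) * r ^ 28) * ((7 : ℝ) * (2 * r ^ 3 + 3) ^ 6 * ((6 : ℝ) * r ^ 2))) / ((2 * r ^ 3 + 3) ^ 7) ^ 2) r := by
      have h := HasDerivAt.div (((((((((hasDerivAt_pow 1 r).const_mul (43740 : ℝ)).add ((hasDerivAt_pow 4 r).const_mul ((-393660) : ℝ))).add ((hasDerivAt_pow 7 r).const_mul (656100 : ℝ))).add ((hasDerivAt_pow 10 r).const_mul ((-486000) : ℝ))).add ((hasDerivAt_pow 13 r).const_mul (189540 : ℝ))).add ((hasDerivAt_pow 16 r).const_mul ((-38880) : ℝ))).add ((hasDerivAt_pow 19 r).const_mul (3420 : ℝ))).add ((hasDerivAt_pow 28 r).const_mul (((-20) : ℝ) / 9))) ((((hasDerivAt_pow 3 r).const_mul (2 : ℝ)).add_const (3 : ℝ)).pow 7) hDne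
      refine h.congr_deriv ?_
      simp only [Pi.add_apply, Pi.pow_apply]
      push_cast
      ring
    have hprod := noth_step U V hU φ H _ 4 hVU (hdiff 4 (by norm_num)) key4 r hr _ _
      (hφD r hr) (hR.const_mul (c ^ 2))
    have hAB : ((((43740 : ℝ) * r ^ 0 + ((-1574640) : ℝ) * r ^ 3 + (4592700 : ℝ) * r ^ 6 + ((-4860000) : ℝ) * r ^ 9 + (2464020 : ℝ) * r ^ 12 + ((-622080) : ℝ) * r ^ 15 + (64980 : ℝ) * r ^ 18 + (((-560) : ℝ) / 9) * r ^ 27) * (2 * r ^ 3 + 3) ^ 7 - ((43740 : ℝ) * r ^ 1 + ((-393660) : ℝ) * r ^ 4 + (656100 : ℝ) * r ^ 7 + ((-486000) : ℝ) * r ^ 10 + (189540 : ℝ) * r ^ 13 + ((-38880) : ℝ) * r ^ 16 + (3420 : ℝ) * r ^ 19 + (((-20) : ℝ) / 9) * r ^ 28) * ((7 : ℝ) * (2 * r ^ 3 + 3) ^ 6 * ((6 : ℝ) * r ^ 2))) / ((2 * r ^ 3 + 3) ^ 7) ^ 2) = ((((-2361960) : ℝ) * r ^ 0 + (118098000 :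 ℝ) * r ^ 3 + ((-566870400) : ℝ) * r ^ 6 + (932011920 : ℝ) * r ^ 9 + ((-775247760) : ℝ) * r ^ 12 + (371090160 : ℝ) * r ^ 15 + ((-105462000) : ℝ) * r ^ 18 + (17048880 : ℝ) * r ^ 21 + ((-1331640) : ℝ) * r ^ 24 + (30720 : ℝ) * r ^ 27 + ((-1680) : ℝ) * r ^ 30 + ((560 : ℝ) / 9) * r ^ 36) / (2 * r ^ 3 + 3) ^ 9) * (-(2 * r ^ 3 + 3) / (2 * (r ^ 3 - 3) ^ 2)) := by
      field_simp
      ring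
    have hkey : iteratedDeriv 5 H (φ r) * (c ^ 2 * (-(2 * r ^ 3 + 3) / (2 * (r ^ 3 - 3) ^ 2))) =
        ((((-2361960) : ℝ) * r ^ 0 + (118098000 : ℝ) * r ^ 3 + ((-566870400) : ℝ) * r ^ 6 + (932011920 : ℝ) * r ^ 9 + ((-775247760) : ℝ) * r ^ 12 + (371090160 : ℝ) * r ^ 15 + ((-105462000) : ℝ) * r ^ 18 + (17048880 : ℝ) * r ^ 21 + ((-1331640) : ℝ) * r ^ 24 + (30720 : ℝ) * r ^ 27 + ((-1680) : ℝ) * r ^ 30 + ((560 : ℝ) / 9) * r ^ 36) / (2 * r ^ 3 + 3) ^ 9) * (c ^ 2 * (-(2 * r ^ 3 + 3) / (2 * (r ^ 3 - 3) ^ 2))) := by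
      rw [hprod, hAB]
      ring
    exact mul_right_cancel₀ (hY r hr) hkey

  have key6 : ∀ r ∈ U, iteratedDeriv 6 H (φ r) = (c * ((((-1785641760) : ℝ) * r ^ 2 + (24998984640 : ℝ) * r ^ 5 + ((-89530093800) : ℝ) * r ^ 8 + (143810296560 : ℝ) * r ^ 11 + ((-129558229920) : ℝ) * r ^ 14 + (72101715840 : ℝ) * r ^ 17 + ((-25719120000) : ℝ) * r ^ 20 + (5856611040 : ℝ) * r ^ 23 + ((-811581120) : ℝ) * r ^ 26 + (60782400 : ℝ) * r ^ 29 + ((-1882440) : ℝ) * r ^ 32 + (5040 : ℝ) * r ^ 35 + (6720 : ℝ) * r ^ 38 + (((-560) : ℝ) / 3) * r ^ 44) / (2 * r ^ 3 + 3) ^ 11)) := by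
    intro r hr
    have hdr := hden r hr
    have hsr := hs r hr
    have hDne : ((2 * r ^ 3 + 3) ^ 9 : ℝ) ≠ 0 := pow_ne_zero 9 hsr
    have hR : HasDerivAt (fun x : ℝ => (((-2361960) : ℝ) * x ^ 0 + (118098000 : ℝ) * x ^ 3 + ((-566870400) : ℝ) * x ^ 6 + (932011920 : ℝ) * x ^ 9 + ((-775247760) : ℝ) * x ^ 12 + (371090160 : ℝ) * x ^ 15 + ((-105462000) : ℝ) * x ^ 18 + (17048880 : ℝ) * x ^ 21 + ((-1331640) : ℝ) * x ^ 24 + (30720 : ℝ) * x ^ 27 + ((-1680) : ℝ) * x ^ 30 + ((560 : ℝ) / 9) * x ^ 36) / (2 * x ^ 3 + 3) ^ 9)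
        ((((354294000 : ℝ) * r ^ 2 + ((-3401222400) : ℝ) * r ^ 5 + (8388107280 : ℝ) * r ^ 8 + ((-9302973120) : ℝ) * r ^ 11 + (5566352400 : ℝ) * r ^ 14 + ((-1898316000) : ℝ) * r ^ 17 + (358026480 : ℝ) * r ^ 20 + ((-31959360) : ℝ) * r ^ 23 + (829440 : ℝ) * r ^ 26 + ((-50400) : ℝ) * r ^ 29 + (2240 : ℝ) * r ^ 35) * (2 * r ^ 3 + 3) ^ 9 - (((-2361960) : ℝ) * r ^ 0 + (118098000 : ℝ) * r ^ 3 + ((-566870400) : ℝ) * r ^ 6 + (932011920 : ℝ) * r ^ 9 + ((-775247760) : ℝ) * r ^ 12 + (371090160 : ℝ) * r ^ 15 + ((-105462000) : ℝ) * r ^ 18 + (17048880 : ℝ) * r ^ 21 + ((-1331640) : ℝ) * r ^ 24 + (30720 : ℝ) * r ^ 27 + ((-1680) : ℝ) * r ^ 30 + ((560 : ℝ) / 9) * r ^ 36) * ((9 : ℝ) * (2 * r ^ 3 + 3) ^ 8 * ((6 : ℝ) * r ^ 2))) / ((2 * r ^ 3 + 3) ^ 9) ^ 2) r := by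
      have h := HasDerivAt.div (((((((((((((hasDerivAt_pow 0 r).const_mul ((-2361960) : ℝ)).add ((hasDerivAt_pow 3 r).const_mul (118098000 : ℝ))).add ((hasDerivAt_pow 6 r).const_mul ((-566870400) : ℝ))).add ((hasDerivAt_pow 9 r).const_mul (932011920 : ℝ))).add ((hasDerivAt_pow 12 r).const_mul ((-775247760) : ℝ))).add ((hasDerivAt_pow 15 r).const_mul (371090160 : ℝ))).add ((hasDerivAt_pow 18 r).const_mul ((-105462000) : ℝ))).add ((hasDerivAt_pow 21 r).const_mul (17048880 : ℝ))).add ((hasDerivAt_pow 24 r).const_mul ((-1331640) : ℝ))).add ((hasDerivAt_pow 27 r).const_mul (30720 : ℝ))).add ((hasDerivAt_pow 30 r).const_mul ((-1680) : ℝ))).add ((hasDerivAt_pow 36 r).const_mul ((560 : ℝ) / 9))) ((((hasDerivAt_pow 3 r).const_mul (2 : ℝ)).add_const (3 : ℝ)).pow 9) hDne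
      refine h.congr_deriv ?_
      simp only [Pi.add_apply, Pi.pow_apply]
      push_cast
      ring
    have hprod := noth_step U V hU φ H _ 5 hVU (hdiff 5 (by norm_num)) key5 r hr _ _
      (hφD r hr) hR
    have hAB : ((((354294000 : ℝ) * r ^ 2 + ((-3401222400) : ℝ) * r ^ 5 + (8388107280 : ℝ) * r ^ 8 + ((-9302973120) : ℝ) * r ^ 11 + (5566352400 : ℝ) * r ^ 14 + ((-1898316000) : ℝ) * r ^ 17 + (358026480 : ℝ) * r ^ 20 + ((-31959360) : ℝ) * r ^ 23 + (829440 : ℝ) * r ^ 26 + ((-50400) : ℝ) * r ^ 29 + (2240 : ℝ) * r ^ 35) * (2 * r ^ 3 + 3) ^ 9 - (((-2361960) : ℝ) * r ^ 0 + (118098000 : ℝ) * r ^ 3 + ((-566870400) : ℝ) * r ^ 6 + (932011920 : ℝ) * r ^ 9 + ((-775247760) : ℝ) * r ^ 12 + (371090160 : ℝ) * r ^ 15 + ((-105462000) : ℝ) * r ^ 18 + (17048880 : ℝ) * r ^ 21 + ((-1331640) : ℝ) * r ^ 24 + (30720 : ℝ) * r ^ 27 + ((-1680) : ℝ) * r ^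 30 + ((560 : ℝ) / 9) * r ^ 36) * ((9 : ℝ) * (2 * r ^ 3 + 3) ^ 8 * ((6 : ℝ) * r ^ 2))) / ((2 * r ^ 3 + 3) ^ 9) ^ 2) = 12 * (((((-1785641760) : ℝ) * r ^ 2 + (24998984640 : ℝ) * r ^ 5 + ((-89530093800) : ℝ) * r ^ 8 + (143810296560 : ℝ) * r ^ 11 + ((-129558229920) : ℝ) * r ^ 14 + (72101715840 : ℝ) * r ^ 17 + ((-25719120000) : ℝ) * r ^ 20 + (5856611040 : ℝ) * r ^ 23 + ((-811581120) : ℝ) * r ^ 26 + (60782400 : ℝ) * r ^ 29 + ((-1882440) : ℝ) * r ^ 32 + (5040 : ℝ) * r ^ 35 + (6720 : ℝ) * r ^ 38 + (((-560) : ℝ) / 3) * r ^ 44) / (2 * r ^ 3 + 3) ^ 11) * (-(2 * r ^ 3 + 3) / (2 * (r ^ 3 - 3) ^ 2))) := by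
      field_simp
      ring
    have hkey : iteratedDeriv 6 H (φ r) * (c ^ 2 * (-(2 * r ^ 3 + 3) / (2 * (r ^ 3 - 3) ^ 2))) =
        (c * ((((-1785641760) : ℝ) * r ^ 2 + (24998984640 : ℝ) * r ^ 5 + ((-89530093800) : ℝ) * r ^ 8 + (143810296560 : ℝ) * r ^ 11 + ((-129558229920) : ℝ) * r ^ 14 + (72101715840 : ℝ) * r ^ 17 + ((-25719120000) : ℝ) * r ^ 20 + (5856611040 : ℝ) * r ^ 23 + ((-811581120) : ℝ) * r ^ 26 + (60782400 : ℝ) * r ^ 29 + ((-1882440) : ℝ) * r ^ 32 + (5040 : ℝ) * r ^ 35 + (6720 : ℝ) * r ^ 38 + (((-560) : ℝ) / 3) * r ^ 44) / (2 * r ^ 3 + 3) ^ 11)) * (c ^ 2 * (-(2 * r ^ 3 + 3) / (2 * (r ^ 3 - 3) ^ 2))) := by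
      rw [hprod, hAB]
      linear_combination (-(((((-1785641760) : ℝ) * r ^ 2 + (24998984640 : ℝ) * r ^ 5 + ((-89530093800) : ℝ) * r ^ 8 + (143810296560 : ℝ) * r ^ 11 + ((-129558229920) : ℝ) * r ^ 14 + (72101715840 : ℝ) * r ^ 17 + ((-25719120000) : ℝ) * r ^ 20 + (5856611040 : ℝ) * r ^ 23 + ((-811581120) : ℝ) * r ^ 26 + (60782400 : ℝ) * r ^ 29 + ((-1882440) : ℝ) * r ^ 32 + (5040 : ℝ) * r ^ 35 + (6720 : ℝ) * r ^ 38 + (((-560) : ℝ) / 3) * r ^ 44) / (2 * r ^ 3 + 3) ^ 11) * (-(2 * r ^ 3 + 3) / (2 * (r ^ 3 - 3) ^ 2)))) * hc3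
    exact mul_right_cancel₀ (hY r hr) hkey

  intro t ht
  obtain ⟨r, hr, rfl⟩ := ht
  have hdr := hden r hr
  have hsr := hs r hr
  unfold NothEqAt
  rw [key2 r hr, key3 r hr, key4 r hr, key5 r hr, key6 r hr]
  have haux : (10 * ((((-108) : ℝ) * r ^ 0 + (144 : ℝ) * r ^ 3 + ((-72) : ℝ) * r ^ 6 + (16 : ℝ) * r ^ 9 + (((-4) : ℝ) / 3) * r ^ 12) / (2 * r ^ 3 + 3) ^ 3) ^ 3 * ((((-1785641760) : ℝ) * r ^ 2 + (24998984640 : ℝ) * r ^ 5 + ((-89530093800) : ℝ) * r ^ 8 + (143810296560 : ℝ) * r ^ 11 + ((-129558229920) : ℝ) * r ^ 14 + (72101715840 : ℝ) * r ^ 17 + ((-25719120000) : ℝ) * r ^ 20 + (5856611040 : ℝ) * r ^ 23 + ((-811581120) : ℝ) * r ^ 26 + (60782400 : ℝ) * r ^ 29 + ((-1882440) : ℝ) * r ^ 32 + (5040 : ℝ) * r ^ 35 + (6720 : ℝ) * r ^ 38 + (((-560) : ℝ) / 3) * r ^ 44) / (2 * r ^ 3 + 3) ^ 11)) - (70 *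 ((((-108) : ℝ) * r ^ 0 + (144 : ℝ) * r ^ 3 + ((-72) : ℝ) * r ^ 6 + (16 : ℝ) * r ^ 9 + (((-4) : ℝ) / 3) * r ^ 12) / (2 * r ^ 3 + 3) ^ 3) ^ 2 * ((((-4860) : ℝ) * r ^ 2 + (7776 : ℝ) * r ^ 5 + ((-4860) : ℝ) * r ^ 8 + (1440 : ℝ) * r ^ 11 + ((-180) : ℝ) * r ^ 14 + ((4 : ℝ) / 3) * r ^ 20) / (2 * r ^ 3 + 3) ^ 5) * ((((-2361960) : ℝ) * r ^ 0 + (118098000 : ℝ) * r ^ 3 + ((-566870400) : ℝ) * r ^ 6 + (932011920 : ℝ) * r ^ 9 + ((-775247760) : ℝ) * r ^ 12 + (371090160 : ℝ) * r ^ 15 + ((-105462000) : ℝ) * r ^ 18 + (17048880 : ℝ) * r ^ 21 + ((-1331640) : ℝ) * r ^ 24 + (30720 : ℝ) * r ^ 27 + ((-1680) : ℝ) * r ^ 30 + ((560 : ℝ) / 9) * r ^ 36) / (2 * r ^ 3 + 3) ^ 9)) - 12 * (49 * ((((-108) : ℝ) * r ^ 0 + (144 : ℝ) * r ^ 3 +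 ((-72) : ℝ) * r ^ 6 + (16 : ℝ) * r ^ 9 + (((-4) : ℝ) / 3) * r ^ 12) / (2 * r ^ 3 + 3) ^ 3) ^ 2 * (((43740 : ℝ) * r ^ 1 + ((-393660) : ℝ) * r ^ 4 + (656100 : ℝ) * r ^ 7 + ((-486000) : ℝ) * r ^ 10 + (189540 : ℝ) * r ^ 13 + ((-38880) : ℝ) * r ^ 16 + (3420 : ℝ) * r ^ 19 + (((-20) : ℝ) / 9) * r ^ 28) / (2 * r ^ 3 + 3) ^ 7) ^ 2) + 12 * (280 * ((((-108) : ℝ) * r ^ 0 + (144 : ℝ) * r ^ 3 + ((-72) : ℝ) * r ^ 6 + (16 : ℝ) * r ^ 9 + (((-4) : ℝ) / 3) * r ^ 12) / (2 * r ^ 3 + 3) ^ 3) * ((((-4860) : ℝ) * r ^ 2 + (7776 : ℝ) * r ^ 5 + ((-4860) : ℝ) * r ^ 8 + (1440 : ℝ) * r ^ 11 + ((-180) : ℝ) * r ^ 14 + ((4 : ℝ) / 3) * r ^ 20) / (2 * r ^ 3 + 3) ^ 5) ^ 2 * (((43740 : ℝ) * r ^ 1 + ((-393660) : ℝ) * r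 ^ 4 + (656100 : ℝ) * r ^ 7 + ((-486000) : ℝ) * r ^ 10 + (189540 : ℝ) * r ^ 13 + ((-38880) : ℝ) * r ^ 16 + (3420 : ℝ) * r ^ 19 + (((-20) : ℝ) / 9) * r ^ 28) / (2 * r ^ 3 + 3) ^ 7)) - 12 * (175 * ((((-4860) : ℝ) * r ^ 2 + (7776 : ℝ) * r ^ 5 + ((-4860) : ℝ) * r ^ 8 + (1440 : ℝ) * r ^ 11 + ((-180) : ℝ) * r ^ 14 + ((4 : ℝ) / 3) * r ^ 20) / (2 * r ^ 3 + 3) ^ 5) ^ 4) = 0 := by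
    field_simp
    ring
  linear_combination c * haux + ((-(49 * ((((-108) : ℝ) * r ^ 0 + (144 : ℝ) * r ^ 3 + ((-72) : ℝ) * r ^ 6 + (16 : ℝ) * r ^ 9 + (((-4) : ℝ) / 3) * r ^ 12) / (2 * r ^ 3 + 3) ^ 3) ^ 2 * (((43740 : ℝ) * r ^ 1 + ((-393660) : ℝ) * r ^ 4 + (656100 : ℝ) * r ^ 7 + ((-486000) : ℝ) * r ^ 10 + (189540 : ℝ) * r ^ 13 + ((-38880) : ℝ) * r ^ 16 + (3420 : ℝ) * r ^ 19 + (((-20) : ℝ) / 9) * r ^ 28) / (2 * r ^ 3 + 3) ^ 7) ^ 2) + (280 * ((((-108) : ℝ) * r ^ 0 + (144 : ℝ) * r ^ 3 + ((-72) : ℝ) * r ^ 6 + (16 : ℝ) * r ^ 9 + (((-4) : ℝ) / 3) * r ^ 12) / (2 * r ^ 3 + 3) ^ 3) * ((((-4860) : ℝ) * r ^ 2 + (7776 : ℝ) * r ^ 5 + ((-4860) : ℝ) * r ^ 8 + (1440 : ℝ) * r ^ 11 + ((-180) : ℝ) * r ^ 14 + ((4 : ℝ) / 3) * r ^ 20)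 / (2 * r ^ 3 + 3) ^ 5) ^ 2 * (((43740 : ℝ) * r ^ 1 + ((-393660) : ℝ) * r ^ 4 + (656100 : ℝ) * r ^ 7 + ((-486000) : ℝ) * r ^ 10 + (189540 : ℝ) * r ^ 13 + ((-38880) : ℝ) * r ^ 16 + (3420 : ℝ) * r ^ 19 + (((-20) : ℝ) / 9) * r ^ 28) / (2 * r ^ 3 + 3) ^ 7)) - (175 * ((((-4860) : ℝ) * r ^ 2 + (7776 : ℝ) * r ^ 5 + ((-4860) : ℝ) * r ^ 8 + (1440 : ℝ) * r ^ 11 + ((-180) : ℝ) * r ^ 14 + ((4 : ℝ) / 3) * r ^ 20) / (2 * r ^ 3 + 3) ^ 5) ^ 4)) * c) * hc3
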